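/- The automaton C is unambiguous: for every input tree there is at most one accepting run. The only nondeterministic choice (at a ∨-labelled node in state P or P_∨, between transitions assigning P or N to the right child) is forced, because by the partition lemma each right subtree is accepted from at most one of the states P, N. -/
import Mathlib


/-- The alphabet {a, b, ∨, ¬}. -/
inductive A4 | la | lb | lor | lneg
deriving DecidableEq

instance : TopologicalSpace A4 := ⊥
instance : DiscreteTopology A4 := ⟨rfl⟩

/-- Infinite binary trees over {a, b, ∨, ¬}. -/
abbrev Tree4 := List (Fin 2) → A4

/-- The length-`n` prefix of a branch. -/
def pre (β : ℕ → Fin 2) (n : ℕ) : List (Fin 2) := List.ofFn (fun i : Fin n => β i)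

/-- `r` occurs infinitely often in the sequence `g`. -/
def InfOften (g : ℕ → ℕ) (r : ℕ) : Prop := ∀ m, ∃ n ≥ m, g n = r

/-- Parity condition: the maximal value occurring infinitely often is even. -/
def ParityOk (g : ℕ → ℕ) : Prop :=
  ∃ r, Even r ∧ InfOften g r ∧ ∀ r', InfOften g r' → r' ≤ r

/-- States of the unambiguous automaton `C` (including the states of `A_G` and `A_L`). -/
inductive QC
  | P | N | Pv | Nv | Tv | TS | Top
  | g1 | g2 | top2 | bot1 | l1 | l0 | top0
deriving DecidableEq

def rankC : QC → ℕ
  | .P => 1 | .N => 1 | .Pv => 1 | .TS => 1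
  | .Nv => 0 | .Tv => 0 | .Top => 0
  | .g1 => 1 | .g2 => 2 | .top2 => 2 | .bot1 => 1 | .l1 => 1 | .l0 => 0 | .top0 => 0

/-- Transition relation of `C`. -/
def deltaC : QC → A4 → QC → QC → Prop := fun q a q1 q2 =>
  match q, a with
  -- the formula layer
  | .P, .lor | .Pv, .lor => (q1 = .Tv ∧ q2 = .P) ∨ (q1 = .Pv ∧ q2 = .N)
  | .N, .lor | .Nv, .lor => q1 = .Nv ∧ q2 = .N
  | .Tv, .lor | .TS, .lor => q1 = .Tv ∧ q2 = .TS
  | .P, .lneg => q1 = .Top ∧ q2 = .N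
  | .N, .lneg => q1 = .Top ∧ q2 = .P
  | .TS, .lneg => q1 = .Top ∧ q2 = .TS
  | .TS, .la | .TS, .lb => q1 = .Top ∧ q2 = .Top
  | .Top, _ => q1 = .Top ∧ q2 = .Top
  -- on a or b, state P acts as g₁ of A_G, state N acts as l₁ of A_L
  | .P, .la => (q1 = .g2 ∧ q2 = .top2) ∨ (q1 = .l1 ∧ q2 = .g1)
  | .P, .lb => q1 = .bot1 ∧ q2 = .bot1
  | .N, .la => q1 = .l1 ∧ q2 = .l0
  | .N, .lb => q1 = .top0 ∧ q2 = .top0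
  -- the A_G component (letters other than a are treated like b)
  | .g1, .la | .g2, .la => (q1 = .g2 ∧ q2 = .top2) ∨ (q1 = .l1 ∧ q2 = .g1)
  | .g1, _ | .g2, _ => q1 = .bot1 ∧ q2 = .bot1
  -- the A_L component
  | .l1, .la | .l0, .la => q1 = .l1 ∧ q2 = .l0
  | .l1, _ | .l0, _ => q1 = .top0 ∧ q2 = .top0
  | .top2, _ => q1 = .top2 ∧ q2 = .top2
  | .bot1, _ => q1 = .bot1 ∧ q2 = .bot1
  | .top0, _ => q1 = .top0 ∧ q2 = .top0
  -- no transitions in the remaining cases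
  | _, _ => False

/-- A run of `C` on `t` starting in state `q0`. -/
def IsRunC (t : Tree4) (q0 : QC) (ρ : List (Fin 2) → QC) : Prop :=
  ρ [] = q0 ∧ ∀ v : List (Fin 2), deltaC (ρ v) (t v) (ρ (v ++ [0])) (ρ (v ++ [1]))

/-- An accepting run: the parity condition holds on every branch. -/
def AccRunC (t : Tree4) (q0 : QC) (ρ : List (Fin 2) → QC) : Prop :=
  IsRunC t q0 ρ ∧ ∀ β : ℕ → Fin 2, ParityOk (fun n => rankC (ρ (pre β n)))

/-- `t` is accepted by `C` started in state `q0`. -/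
def AcceptsFrom (q0 : QC) (t : Tree4) : Prop := ∃ ρ, AccRunC t q0 ρ


/-! ### Auxiliary lemmas for the unambiguity proof -/

lemma pre_zero (β : ℕ → Fin 2) : pre β 0 = [] := rfl

lemma pre_succ (β : ℕ → Fin 2) (n : ℕ) : pre β (n+1) = pre β n ++ [β n] := by
  rw [pre, List.ofFn_succ', List.concat_eq_append]
  rfl

lemma fin2 (d : Fin 2) : d = 0 ∨ d = 1 := by fin_cases d <;> simp

lemma infOften_add (g : ℕ → ℕ) (k r : ℕ) : InfOften (fun n => g (n + k)) r ↔ InfOften g r := by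
  constructor
  · intro h m
    obtain ⟨n, hn, he⟩ := h m
    exact ⟨n + k, le_trans hn (Nat.le_add_right _ _), he⟩
  · intro h m
    obtain ⟨n, hn, he⟩ := h (m + k)
    refine ⟨n - k, by omega, ?_⟩
    show g (n - k + k) = r
    have : n - k + k = n := by omega
    rw [this]; exact he

lemma parityOk_shift (g : ℕ → ℕ) (k : ℕ) (h : ParityOk g) : ParityOk (fun n => g (n + k)) := by
  obtain ⟨r, hr, hi, hm⟩ := h
  exact ⟨r, hr, (infOften_add g k r).2 hi, fun r' h' => hm r' ((infOften_add g k r').1 h')⟩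

lemma parity_eventually_one (g : ℕ → ℕ) (hev : ∃ M, ∀ n ≥ M, g n = 1) : ¬ ParityOk g := by
  rintro ⟨r, hr, hi, -⟩
  obtain ⟨M, hM⟩ := hev
  obtain ⟨n, hn, he⟩ := hi M
  rw [hM n hn] at he
  exact (Nat.not_even_iff.2 (by omega)) (he ▸ hr)

lemma parity_bounded (g : ℕ → ℕ) (hb : ∀ n, g n ≤ 1) (h1 : InfOften g 1) : ¬ ParityOk g := by
  rintro ⟨r, hr, hi, hm⟩
  have hge := hm 1 h1
  obtain ⟨n, -, he⟩ := hi 0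
  have hle : r ≤ 1 := he ▸ hb n
  have : r = 1 := le_antisymm hle hge
  exact (Nat.not_even_iff.2 (by omega)) (this ▸ hr)

/-- the branch that first follows `v` and then `β` -/
def extSeq (v : List (Fin 2)) (β : ℕ → Fin 2) : ℕ → Fin 2 :=
  fun n => if h : n < v.length then v.get ⟨n, h⟩ else β (n - v.length)

lemma pre_ext (v : List (Fin 2)) (β : ℕ → Fin 2) :
    ∀ n, pre (extSeq v β) (v.length + n) = v ++ pre β n := by
  intro n
  induction n with
  | zero =>
    rw [Nat.add_zero, pre_zero, List.append_nil]
    apply List.ext_getElem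
    · simp [pre]
    · intro i h1 h2
      simp only [pre, List.getElem_ofFn, extSeq]
      rw [dif_pos h2]
      simp
  | succ n ih =>
    have h : v.length + (n+1) = (v.length + n) + 1 := rfl
    rw [h, pre_succ, ih, pre_succ, List.append_assoc]
    congr 3
    simp [extSeq]

lemma acc_restrict {t : Tree4} {q : QC} {ρ : List (Fin 2) → QC} (h : AccRunC t q ρ)
    (v : List (Fin 2)) :
    AccRunC (fun w => t (v ++ w)) (ρ v) (fun w => ρ (v ++ w)) := by
  refine ⟨⟨by simp, fun w => ?_⟩, fun β => ?_⟩
  · have hw := h.1.2 (v ++ w)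
    simpa [List.append_assoc] using hw
  · have H := parityOk_shift _ v.length (h.2 (extSeq v β))
    have he : (fun n => rankC (ρ (v ++ pre β n)))
        = fun n => rankC (ρ (pre (extSeq v β) (n + v.length))) := by
      funext n; rw [Nat.add_comm, pre_ext]
    show ParityOk fun n => rankC (ρ (v ++ pre β n))
    rw [he]; exact H

lemma noAccBot (t : Tree4) (ρ : List (Fin 2) → QC) (h : AccRunC t QC.bot1 ρ) : False := by
  have hk : ∀ k, ρ (pre (fun _ => 0) k) = QC.bot1 := by
    intro k
    induction k with
    | zero => rw [pre_zero]; exact h.1.1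
    | succ k ih =>
      have hδ := h.1.2 (pre (fun _ => 0) k)
      rw [ih] at hδ
      rw [pre_succ]
      cases ha : t (pre (fun _ => 0) k) <;> rw [ha] at hδ <;>
        simp only [deltaC] at hδ <;> exact hδ.1
  refine absurd (h.2 (fun _ => 0)) (parity_eventually_one _ ⟨0, fun n _ => ?_⟩)
  show rankC (ρ (pre (fun _ => 0) n)) = 1
  rw [hk n]
  rfl

lemma noBot {t : Tree4} {q : QC} {ρ : List (Fin 2) → QC} (h : AccRunC t q ρ)
    (v : List (Fin 2)) : ρ v ≠ QC.bot1 := by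
  intro hb
  have hr := acc_restrict h v
  rw [hb] at hr
  exact noAccBot _ _ hr

/-- `p` is a state of the `A_G` component and `q` one of the `A_L` component. -/
def GLp (p q : QC) : Prop := (p = .g1 ∨ p = .g2) ∧ (q = .l1 ∨ q = .l0)

/-- oriented "dual" pairs of states -/
def OS (p q : QC) : Prop := (p = .P ∧ q = .N) ∨ (p = .Pv ∧ q = .Nv) ∨ GLp p q

/-- unordered "dual" pairs of states: no tree is accepted from both -/
def Spair (p q : QC) : Prop := OS p q ∨ OS q p

lemma step' {t : Tree4} {q1 q2 : QC} {ρ1 ρ2 : List (Fin 2) → QC}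
    (h1 : AccRunC t q1 ρ1) (h2 : AccRunC t q2 ρ2) (v : List (Fin 2))
    (hS : OS (ρ1 v) (ρ2 v)) :
    ∃ d : Fin 2, Spair (ρ1 (v ++ [d])) (ρ2 (v ++ [d])) ∧
      (GLp (ρ1 v) (ρ2 v) → GLp (ρ1 (v ++ [d])) (ρ2 (v ++ [d]))) ∧
      (GLp (ρ2 v) (ρ1 v) → GLp (ρ2 (v ++ [d])) (ρ1 (v ++ [d]))) := by
  have hδ1 := h1.1.2 v
  have hδ2 := h2.1.2 v
  rcases hS with ⟨e1, e2⟩ | ⟨e1, e2⟩ | ⟨e1 | e1, e2 | e2⟩ <;>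
    rw [e1] at hδ1 <;> rw [e2] at hδ2 <;> rw [e1, e2] <;>
    cases ha : t v <;> rw [ha] at hδ1 hδ2 <;> simp only [deltaC] at hδ1 hδ2 <;>
    first
    | exact hδ1.elim
    | exact absurd hδ1.1 (noBot h1 _)
    | (refine ⟨1, ?_, ?_, ?_⟩ <;> simp [Spair, OS, GLp, hδ1.1, hδ1.2, hδ2.1, hδ2.2]
       done)
    | (rcases hδ1 with ⟨f1, f2⟩ | ⟨f1, f2⟩ <;>
       first
       | (refine ⟨0, ?_, ?_, ?_⟩ <;> simp [Spair, OS, GLp, f1, f2, hδ2.1, hδ2.2]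
          done)
       | (refine ⟨1, ?_, ?_, ?_⟩ <;> simp [Spair, OS, GLp, f1, f2, hδ2.1, hδ2.2]
          done))

lemma step {t : Tree4} {q1 q2 : QC} {ρ1 ρ2 : List (Fin 2) → QC}
    (h1 : AccRunC t q1 ρ1) (h2 : AccRunC t q2 ρ2) (v : List (Fin 2))
    (hS : Spair (ρ1 v) (ρ2 v)) :
    ∃ d : Fin 2, Spair (ρ1 (v ++ [d])) (ρ2 (v ++ [d])) ∧
      (GLp (ρ1 v) (ρ2 v) → GLp (ρ1 (v ++ [d])) (ρ2 (v ++ [d]))) ∧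
      (GLp (ρ2 v) (ρ1 v) → GLp (ρ2 (v ++ [d])) (ρ1 (v ++ [d]))) := by
  rcases hS with hO | hO
  · exact step' h1 h2 v hO
  · obtain ⟨d, hs, hga, hgb⟩ := step' h2 h1 v hO
    exact ⟨d, Or.symm hs, hgb, hga⟩

lemma glTail {t : Tree4} {qa qb : QC} {ρa ρb : List (Fin 2) → QC}
    (ha : AccRunC t qa ρa) (hb : AccRunC t qb ρb) (β : ℕ → Fin 2) (N0 : ℕ)
    (hor : ∀ n ≥ N0, GLp (ρa (pre β n)) (ρb (pre β n))) : False := by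
  obtain ⟨r, hre, hinf, hmax⟩ := hb.2 β
  have hb1 : ∀ n ≥ N0, rankC (ρb (pre β n)) ≤ 1 := by
    intro n hn
    rcases (hor n hn).2 with h | h <;> rw [h] <;> simp [rankC]
  have hr0 : r = 0 := by
    obtain ⟨n, hn, he⟩ := hinf N0
    have h1 : r ≤ 1 := he ▸ hb1 n hn
    have h2 := Nat.even_iff.1 hre
    omega
  have hne : ∃ M, ∀ n ≥ M, rankC (ρb (pre β n)) ≠ 1 := by
    by_contra hc
    push_neg at hc
    have hio : InfOften (fun n => rankC (ρb (pre β n))) 1 := fun m => hc m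
    have := hmax 1 hio
    omega
  obtain ⟨M, hM⟩ := hne
  have hl0 : ∀ n ≥ max M N0, ρb (pre β n) = QC.l0 := by
    intro n hn
    rcases (hor n (le_trans (le_max_right _ _) hn)).2 with h | h
    · exact absurd (by simp [h, rankC] : rankC (ρb (pre β n)) = 1)
        (hM n (le_trans (le_max_left _ _) hn))
    · exact h
  have hg1 : ∀ n ≥ max M N0, ρa (pre β (n+1)) = QC.g1 := by
    intro n hn
    have e0 := hl0 n hn
    have e1 := hl0 (n+1) (le_trans hn (Nat.le_succ n))
    have hδa := ha.1.2 (pre β n)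
    have hδb := hb.1.2 (pre β n)
    rw [e0] at hδb
    rw [pre_succ] at e1
    have horn := (hor n (le_trans (le_max_right M N0) hn)).1
    have horc := (hor (n+1) (le_trans (le_trans (le_max_right M N0) hn) (Nat.le_succ n))).1
    rw [pre_succ] at horc
    have hla : t (pre β n) = A4.la := by
      cases ha' : t (pre β n) <;> rw [ha'] at hδb <;> simp only [deltaC] at hδb
      all_goals try rfl
      all_goals (
        rcases fin2 (β n) with h | h
        · rw [h] at e1; exact absurd (hδb.1.symm.trans e1) (by decide)
        · rw [h] at e1; exact absurd (hδb.2.symm.trans e1) (by decide))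
    rw [hla] at hδb
    simp only [deltaC] at hδb
    have hδa' : (ρa (pre β n ++ [0]) = QC.g2 ∧ ρa (pre β n ++ [1]) = QC.top2) ∨
        (ρa (pre β n ++ [0]) = QC.l1 ∧ ρa (pre β n ++ [1]) = QC.g1) := by
      rcases horn with eg | eg <;> rw [eg, hla] at hδa <;>
        simpa only [deltaC] using hδa
    have hβ : β n = 1 := by
      rcases fin2 (β n) with h | h
      · rw [h] at e1; exact absurd (hδb.1.symm.trans e1) (by decide)
      · exact h
    rw [pre_succ, hβ]
    rw [hβ] at horc
    rcases hδa' with ⟨f1, f2⟩ | ⟨f1, f2⟩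
    · rcases horc with h | h <;> exact absurd (f2.symm.trans h) (by decide)
    · exact f2
  refine absurd (ha.2 β) (parity_eventually_one _ ⟨max M N0 + 1, fun n hn => ?_⟩)
  show rankC (ρa (pre β n)) = 1
  obtain ⟨k, rfl⟩ := Nat.exists_eq_add_of_le hn
  have hh := hg1 (max M N0 + k) (by omega)
  rw [show max M N0 + 1 + k = (max M N0 + k) + 1 by omega, hh]
  rfl

lemma master {t : Tree4} {q1 q2 : QC} {ρ1 ρ2 : List (Fin 2) → QC}
    (h1 : AccRunC t q1 ρ1) (h2 : AccRunC t q2 ρ2) (hS : Spair q1 q2) : False := by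
  classical
  have hS0 : Spair (ρ1 []) (ρ2 []) := by rw [h1.1.1, h2.1.1]; exact hS
  let D : List (Fin 2) → Fin 2 := fun v =>
    if h : Spair (ρ1 v) (ρ2 v) then (step h1 h2 v h).choose else 0
  let V : ℕ → List (Fin 2) := fun n => Nat.rec [] (fun _ w => w ++ [D w]) n
  let β : ℕ → Fin 2 := fun n => D (V n)
  have hVsucc : ∀ n, V (n+1) = V n ++ [β n] := fun n => rfl
  have hpre : ∀ n, pre β n = V n := by
    intro n
    induction n with
    | zero => rfl
    | succ n ih => rw [pre_succ, ih, hVsucc]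
  have inv : ∀ n, Spair (ρ1 (V n)) (ρ2 (V n)) := by
    intro n
    induction n with
    | zero => exact hS0
    | succ n ih =>
      have hd : V (n+1) = V n ++ [(step h1 h2 (V n) ih).choose] := by
        rw [hVsucc]
        show V n ++ [D (V n)] = _
        rw [show D (V n) = (step h1 h2 (V n) ih).choose from dif_pos ih]
      rw [hd]
      exact (step h1 h2 (V n) ih).choose_spec.1
  have glstep : ∀ n,
      (GLp (ρ1 (V n)) (ρ2 (V n)) → GLp (ρ1 (V (n+1))) (ρ2 (V (n+1)))) ∧
      (GLp (ρ2 (V n)) (ρ1 (V n)) → GLp (ρ2 (V (n+1))) (ρ1 (V (n+1)))) := by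
    intro n
    have hd : V (n+1) = V n ++ [(step h1 h2 (V n) (inv n)).choose] := by
      rw [hVsucc]
      show V n ++ [D (V n)] = _
      rw [show D (V n) = (step h1 h2 (V n) (inv n)).choose from dif_pos (inv n)]
    rw [hd]
    exact ⟨(step h1 h2 (V n) (inv n)).choose_spec.2.1,
      (step h1 h2 (V n) (inv n)).choose_spec.2.2⟩
  by_cases hGL : ∃ n, GLp (ρ1 (V n)) (ρ2 (V n)) ∨ GLp (ρ2 (V n)) (ρ1 (V n))
  · obtain ⟨N0, hN0⟩ := hGL
    rcases hN0 with hor | hor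
    · have hall : ∀ n ≥ N0, GLp (ρ1 (V n)) (ρ2 (V n)) := by
        intro n hn
        induction n, hn using Nat.le_induction with
        | base => exact hor
        | succ n hn ih => exact (glstep n).1 ih
      exact glTail h1 h2 β N0 (fun n hn => by rw [hpre n]; exact hall n hn)
    · have hall : ∀ n ≥ N0, GLp (ρ2 (V n)) (ρ1 (V n)) := by
        intro n hn
        induction n, hn using Nat.le_induction with
        | base => exact hor
        | succ n hn ih => exact (glstep n).2 ih
      exact glTail h2 h1 β N0 (fun n hn => by rw [hpre n]; exact hall n hn)
  · push_neg at hGL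
    have hform : ∀ n, rankC (ρ1 (V n)) ≤ 1 ∧ rankC (ρ2 (V n)) ≤ 1 ∧
        (rankC (ρ1 (V n)) = 1 ∨ rankC (ρ2 (V n)) = 1) := by
      intro n
      have hg := hGL n
      rcases inv n with h | h <;>
        rcases h with ⟨ea, eb⟩ | ⟨ea, eb⟩ | h
      · rw [ea, eb]; exact ⟨le_refl _, le_refl _, Or.inl rfl⟩
      · rw [ea, eb]; exact ⟨le_refl _, by simp [rankC], Or.inl rfl⟩
      · exact absurd h (hg.1)
      · rw [ea, eb]; exact ⟨le_refl _, le_refl _, Or.inl rfl⟩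
      · rw [ea, eb]; exact ⟨by simp [rankC], le_refl _, Or.inr rfl⟩
      · exact absurd h (hg.2)
    by_cases hio : InfOften (fun n => rankC (ρ1 (pre β n))) 1
    · refine absurd (h1.2 β) (parity_bounded _ (fun n => ?_) hio)
      show rankC (ρ1 (pre β n)) ≤ 1
      rw [hpre n]; exact (hform n).1
    · unfold InfOften at hio
      push_neg at hio
      obtain ⟨m0, hm0⟩ := hio
      have hio2 : InfOften (fun n => rankC (ρ2 (pre β n))) 1 := by
        intro m
        refine ⟨max m m0, le_max_left _ _, ?_⟩
        show rankC (ρ2 (pre β (max m m0))) = 1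
        rcases (hform (max m m0)).2.2 with h | h
        · exact absurd (by rw [hpre (max m m0)]; exact h)
            (hm0 (max m m0) (le_max_right _ _))
        · rw [hpre (max m m0)]; exact h
      refine absurd (h2.2 β) (parity_bounded _ (fun n => ?_) hio2)
      show rankC (ρ2 (pre β n)) ≤ 1
      rw [hpre n]; exact (hform n).2.1

/-- The automaton `C` is unambiguous: every tree has at most one accepting run. -/
theorem C_unambiguous (t : Tree4) (ρ₁ ρ₂ : List (Fin 2) → QC)
    (h1 : AccRunC t QC.P ρ₁) (h2 : AccRunC t QC.P ρ₂) : ρ₁ = ρ₂ := by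
  funext v
  induction v using List.reverseRecOn with
  | nil => rw [h1.1.1, h2.1.1]
  | append_singleton w d ih =>
    have hδ1 := h1.1.2 w
    have hδ2 := h2.1.2 w
    rw [← ih] at hδ2
    have hboth : ρ₁ (w ++ [0]) = ρ₂ (w ++ [0]) ∧ ρ₁ (w ++ [1]) = ρ₂ (w ++ [1]) := by
      cases hq : ρ₁ w <;> rw [hq] at hδ1 hδ2 <;>
      cases ha : t w <;> rw [ha] at hδ1 hδ2 <;> simp only [deltaC] at hδ1 hδ2 <;>
      first
      | exact hδ1.elim
      | exact ⟨hδ1.1.trans hδ2.1.symm, hδ1.2.trans hδ2.2.symm⟩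
      | (rcases hδ1 with ⟨e1, e2⟩ | ⟨e1, e2⟩ <;> rcases hδ2 with ⟨f1, f2⟩ | ⟨f1, f2⟩ <;>
         first
         | exact ⟨e1.trans f1.symm, e2.trans f2.symm⟩
         | (refine (master (acc_restrict h1 (w ++ [0])) (acc_restrict h2 (w ++ [0])) ?_).elim
            simp [Spair, OS, GLp, e1, f1]
            done)
         | (refine (master (acc_restrict h1 (w ++ [1])) (acc_restrict h2 (w ++ [1])) ?_).elim
            simp [Spair, OS, GLp, e2, f2]
            done))
    rcases fin2 d with h | h <;> rw [h]
    · exact hboth.1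
    · exact hboth.2
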